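/- Let Δ ≥ δ ≥ 1 be integers and let f : ℝ → ℝ → ℝ be a symmetric function (f(x,y) = f(y,x) for all x,y). Define the degree-based index F(G) = ∑_{uv ∈ E(G)} f(d(u), d(v)), where d denotes vertex degree. Suppose a, b ∈ {δ, δ+1, …, Δ} with a ≤ b are chosen to minimise the quantity a·b·f(a,b)/(a+b) over all such pairs. Then every finite simple graph G with minimum degree at least δ and maximum degree at most Δ satisfies F(G) ≥ (a·b·f(a,b)/(a+b))·|G|, where |G| is the number of vertices of G. -/
import Mathlib

open Finset SimpleGraph

/-- Sum of a function of the edge over all darts is twice the sum over edges. -/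
lemma sum_dart_edge_aux {V : Type*} [Fintype V] [DecidableEq V]
    (G : SimpleGraph V) [DecidableRel G.Adj] (F : Sym2 V → ℝ) :
    ∑ d : G.Dart, F d.edge = 2 * ∑ e ∈ G.edgeFinset, F e := by
  rw [← Finset.sum_fiberwise_of_maps_to
      (g := SimpleGraph.Dart.edge) (t := G.edgeFinset)
      (fun d _ => by rw [mem_edgeFinset]; exact d.edge_mem) (fun d => F d.edge)]
  rw [Finset.mul_sum]
  refine Finset.sum_congr rfl fun e he => ?_
  have hcard : #({d : G.Dart | d.edge = e} : Finset _) = 2 :=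
    G.dart_edge_fiber_card e (by rwa [← mem_edgeFinset])
  calc ∑ d ∈ ({d : G.Dart | d.edge = e} : Finset _), F d.edge
      = ∑ d ∈ ({d : G.Dart | d.edge = e} : Finset _), F e := by
        refine Finset.sum_congr rfl fun d hd => ?_
        rw [Finset.mem_filter] at hd
        rw [hd.2]
    _ = 2 * F e := by rw [Finset.sum_const, hcard]; ring

lemma sum_dart_fst_inv {V : Type*} [Fintype V] [DecidableEq V]
    (G : SimpleGraph V) [DecidableRel G.Adj] (hpos : ∀ v : V, 0 < G.degree v) :
    ∑ d : G.Dart, (1 : ℝ) / G.degree d.fst = Fintype.card V := by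
  rw [← Finset.sum_fiberwise_of_maps_to
      (g := fun d : G.Dart => d.fst) (t := Finset.univ)
      (fun d _ => Finset.mem_univ _) (fun d => (1 : ℝ) / G.degree d.fst)]
  have : ∀ v : V, ∑ d ∈ ({d : G.Dart | d.fst = v} : Finset _),
      (1 : ℝ) / G.degree d.fst = 1 := by
    intro v
    have : ∑ d ∈ ({d : G.Dart | d.fst = v} : Finset _),
        (1 : ℝ) / G.degree d.fst
        = ∑ _d ∈ ({d : G.Dart | d.fst = v} : Finset _), (1 : ℝ) / G.degree v := by
      refine Finset.sum_congr rfl fun d hd => ?_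
      rw [Finset.mem_filter] at hd
      rw [hd.2]
    have hne : (G.degree v : ℝ) ≠ 0 := Nat.cast_ne_zero.mpr (hpos v).ne'
    rw [this, Finset.sum_const, G.dart_fst_fiber_card_eq_degree, nsmul_eq_mul,
      mul_one_div, div_self hne]
  simp only [this]
  simp [Finset.card_univ]

/-- **Theorem (general degree-based index lower bound).**
If `a ≤ b` in `{δ, …, Δ}` minimise `a·b·f(a,b)/(a+b)`, then any graph `G` with
minimum degree at least `δ` and maximum degree at most `Δ` satisfies
`F(G) ≥ (a·b·f(a,b)/(a+b))·|G|`, where `F(G) = ∑_{uv ∈ E(G)} f(d(u), d(v))`. -/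
theorem degree_based_index_lower_bound {V : Type*} [Fintype V] [DecidableEq V]
    (G : SimpleGraph V) [DecidableRel G.Adj]
    (δ Δ : ℕ) (hδ : 1 ≤ δ) (hδΔ : δ ≤ Δ)
    (f : ℝ → ℝ → ℝ) (hf : ∀ x y : ℝ, f x y = f y x)
    (a b : ℕ) (ha : a ∈ Finset.Icc δ Δ) (hb : b ∈ Finset.Icc δ Δ) (hab : a ≤ b)
    (hmin : ∀ a' b' : ℕ, a' ∈ Finset.Icc δ Δ → b' ∈ Finset.Icc δ Δ → a' ≤ b' →
      (a : ℝ) * b * f a b / (a + b) ≤ (a' : ℝ) * b' * f a' b' / (a' + b'))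
    (hmindeg : ∀ v : V, δ ≤ G.degree v) (hmaxdeg : ∀ v : V, G.degree v ≤ Δ) :
    (a : ℝ) * b * f a b / (a + b) * Fintype.card V ≤
      ∑ e ∈ G.edgeFinset,
        Sym2.lift ⟨fun u v => f (G.degree u) (G.degree v), fun u v => hf _ _⟩ e := by
  classical
  set m : ℝ := (a : ℝ) * b * f a b / (a + b) with hm
  have hpos : ∀ v : V, 0 < G.degree v := fun v => lt_of_lt_of_le hδ (hmindeg v)
  have hIcc : ∀ v : V, G.degree v ∈ Finset.Icc δ Δ := fun v =>
    Finset.mem_Icc.mpr ⟨hmindeg v, hmaxdeg v⟩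
  -- m ≤ du·dv·f(du,dv)/(du+dv) for any adjacent-degree pair
  have key : ∀ u v : V, m ≤ (G.degree u : ℝ) * G.degree v *
      f (G.degree u) (G.degree v) / (G.degree u + G.degree v) := by
    intro u v
    rcases le_total (G.degree u) (G.degree v) with h | h
    · exact hmin _ _ (hIcc u) (hIcc v) h
    · have := hmin _ _ (hIcc v) (hIcc u) h
      calc m ≤ (G.degree v : ℝ) * G.degree u * f (G.degree v) (G.degree u) /
            (G.degree v + G.degree u) := this
        _ = (G.degree u : ℝ) * G.degree v * f (G.degree u) (G.degree v) /
            (G.degree u + G.degree v) := by rw [hf]; ring_nf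
  -- auxiliary function H on edges
  set H : Sym2 V → ℝ := Sym2.lift ⟨fun u v => (1 : ℝ) / G.degree u + 1 / G.degree v,
    fun u v => by ring⟩ with hH
  -- pointwise bound
  have hpw : ∀ e ∈ G.edgeFinset, m * H e ≤
      Sym2.lift ⟨fun u v => f (G.degree u) (G.degree v), fun u v => hf _ _⟩ e := by
    intro e he
    induction e with
    | h u v =>
      simp only [hH, Sym2.lift_mk]
      have hu : (0 : ℝ) < G.degree u := Nat.cast_pos.mpr (hpos u)
      have hv : (0 : ℝ) < G.degree v := Nat.cast_pos.mpr (hpos v)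
      have hsum : (0 : ℝ) < (G.degree u : ℝ) + G.degree v := by linarith
      have hprod : (0 : ℝ) < (G.degree u : ℝ) * G.degree v := mul_pos hu hv
      have hHpos : (0 : ℝ) < 1 / (G.degree u : ℝ) + 1 / G.degree v := by positivity
      have := mul_le_mul_of_nonneg_right (key u v) hHpos.le
      calc m * ((1 : ℝ) / G.degree u + 1 / G.degree v)
          ≤ (G.degree u : ℝ) * G.degree v * f (G.degree u) (G.degree v) /
              (G.degree u + G.degree v) *
              ((1 : ℝ) / G.degree u + 1 / G.degree v) := this
        _ = f (G.degree u) (G.degree v) := by field_simp; ring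
  -- the sum of H over edges equals |V|
  have hHsum : ∑ e ∈ G.edgeFinset, H e = Fintype.card V := by
    have h2 : ∑ d : G.Dart, H d.edge = 2 * ∑ e ∈ G.edgeFinset, H e :=
      sum_dart_edge_aux G H
    have h3 : ∑ d : G.Dart, H d.edge
        = ∑ d : G.Dart, ((1 : ℝ) / G.degree d.fst + 1 / G.degree d.snd) := by
      refine Finset.sum_congr rfl fun d _ => ?_
      rcases d with ⟨⟨u, v⟩, hadj⟩
      simp [hH, SimpleGraph.Dart.edge]
    have h4 : ∑ d : G.Dart, (1 : ℝ) / G.degree d.snd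
        = ∑ d : G.Dart, (1 : ℝ) / G.degree d.fst := by
      exact Finset.sum_bijective _ (SimpleGraph.Dart.symm_involutive (G := G)).bijective
        (fun _ => by simp) (fun d _ => rfl)
    have h5 := sum_dart_fst_inv G hpos
    rw [h3, Finset.sum_add_distrib, h4, h5] at h2
    linarith
  calc m * Fintype.card V = ∑ e ∈ G.edgeFinset, m * H e := by
        rw [← Finset.mul_sum, hHsum]
    _ ≤ _ := Finset.sum_le_sum hpw
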